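/- Let K ≥ 2 be an integer, y ∈ {1,…,K}, and let v_1,…,v_K and ε be vectors in a real inner product space with ⟨ε, v_k⟩ = 0 for every k = 1,…,K, and set x = Σ_{k=1}^K v_k + ε. If class y dominates the representation, i.e. ‖Σ_{k≠y} v_k‖ < ‖v_y‖, and class y positively dominates the representation, i.e. ‖v_y‖ ≤ ‖Σ_{j≠k} v_j‖ for every k ≠ y, then ‖x − v_y‖ < ‖x − v_k‖ for every k ≠ y; in particular y is the unique minimizer of k ↦ ‖x − v_k‖, so the sparse representation classifier assigns x its correct label y. -/

import Mathlib

open Finset RealInnerProductSpace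

lemma src_aux {E : Type*} [NormedAddCommGroup E] [InnerProductSpace ℝ E]
    {K : ℕ} (v : Fin K → E) (ε : E) (horth : ∀ k, ⟪ε, v k⟫ = 0) (k : Fin K) :
    ‖(∑ k, v k + ε) - v k‖ ^ 2 = ‖∑ j ∈ univ.erase k, v j‖ ^ 2 + ‖ε‖ ^ 2 := by
  have hsum : (∑ k, v k + ε) - v k = (∑ j ∈ univ.erase k, v j) + ε := by
    rw [← Finset.add_sum_erase _ v (mem_univ k)]; abel
  rw [hsum, norm_add_sq_real]
  have : ⟪∑ j ∈ univ.erase k, v j, ε⟫ = 0 := by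
    rw [sum_inner]
    exact Finset.sum_eq_zero fun j _ => by rw [real_inner_comm]; exact horth j
  rw [this]; ring

/-- class dominance plus positive class dominance imply correct
classification by the sparse representation classifier. -/
theorem src_dominance_implies_correct_classification
    {E : Type*} [NormedAddCommGroup E] [InnerProductSpace ℝ E]
    (K : ℕ) (hK : 2 ≤ K) (y : Fin K) (v : Fin K → E) (ε : E)
    (horth : ∀ k, ⟪ε, v k⟫ = 0)
    (x : E) (hx : x = ∑ k, v k + ε)
    (hdom : ‖∑ k ∈ univ.erase y, v k‖ < ‖v y‖)
    (hposdom : ∀ k, k ≠ y → ‖v y‖ ≤ ‖∑ j ∈ univ.erase k, v j‖) :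
    ∀ k, k ≠ y → ‖x - v y‖ < ‖x - v k‖ := by
  intro k hk
  subst hx
  have h1 := src_aux v ε horth y
  have h2 := src_aux v ε horth k
  have hlt : ‖∑ j ∈ univ.erase y, v j‖ < ‖∑ j ∈ univ.erase k, v j‖ :=
    lt_of_lt_of_le hdom (hposdom k hk)
  have hy := norm_nonneg (∑ j ∈ univ.erase y, v j)
  have hk2 := norm_nonneg (∑ j ∈ univ.erase k, v j)
  have : ‖(∑ k, v k + ε) - v y‖ ^ 2 < ‖(∑ k', v k' + ε) - v k‖ ^ 2 := by
    rw [h1, h2]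
    nlinarith
  exact lt_of_pow_lt_pow_left₀ 2 (norm_nonneg _) this
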